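/- Let m > 0 and θ ∈ (0, 2π/3) with θ ≠ π/2. Set θ_1 = −θ, θ_2 = θ, θ_3 = 0, equal masses m_1 = m_2 = m_3 = m, and ω² = 2m( 1/|sin(2θ)|³ + 1/(sin²θ · sin(2θ)) ). Then ω² > 0 and the equations of motion for a collinear relative equilibrium on a rotating meridian under the cotangent potential hold: (ω²/2) m sin(2θ_k) = Σ_{j≠k} m² sin(θ_k − θ_j) / |sin(θ_k − θ_j)|³ for k = 1,2,3. That is, for every such θ the isosceles configuration with the middle body at the pole and the outer bodies at polar angles ±θ is an Eulerian relative equilibrium of the equal-mass curved three-body problem. -/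

import Mathlib

open Real

/-- Isosceles Eulerian relative equilibria of the equal-mass curved three-body
problem under the cotangent potential: for `θ ∈ (0, 2π/3)`, `θ ≠ π/2`, the
configuration `θ_1 = −θ, θ_2 = θ, θ_3 = 0` with
`ω² = 2m(1/|sin 2θ|³ + 1/(sin²θ sin 2θ))` satisfies the equations of motion
on a rotating meridian, and `ω² > 0`. -/
theorem isosceles_ERE_cotangent
    (m θ : ℝ) (hm : 0 < m)
    (hθ0 : 0 < θ) (hθ1 : θ < 2 * Real.pi / 3) (hθ2 : θ ≠ Real.pi / 2)
    (θ1 θ2 θ3 W : ℝ)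
    (hθ1def : θ1 = -θ) (hθ2def : θ2 = θ) (hθ3def : θ3 = 0)
    (hW : W = 2 * m * (1 / |Real.sin (2 * θ)| ^ 3
      + 1 / (Real.sin θ ^ 2 * Real.sin (2 * θ)))) :
    0 < W ∧
    (W / 2 * (m * Real.sin (2 * θ1))
      = m ^ 2 * Real.sin (θ1 - θ2) / |Real.sin (θ1 - θ2)| ^ 3
        + m ^ 2 * Real.sin (θ1 - θ3) / |Real.sin (θ1 - θ3)| ^ 3) ∧
    (W / 2 * (m * Real.sin (2 * θ2))
      = m ^ 2 * Real.sin (θ2 - θ1) / |Real.sin (θ2 - θ1)| ^ 3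
        + m ^ 2 * Real.sin (θ2 - θ3) / |Real.sin (θ2 - θ3)| ^ 3) ∧
    (W / 2 * (m * Real.sin (2 * θ3))
      = m ^ 2 * Real.sin (θ3 - θ1) / |Real.sin (θ3 - θ1)| ^ 3
        + m ^ 2 * Real.sin (θ3 - θ2) / |Real.sin (θ3 - θ2)| ^ 3) := by
  rw [hθ1def, hθ2def, hθ3def, hW]
  have hπ := Real.pi_pos
  have hθπ : θ < Real.pi := by linarith
  have hsθ : 0 < Real.sin θ := Real.sin_pos_of_pos_of_lt_pi hθ0 hθπ
  have hs2 : Real.sin (2 * θ) ≠ 0 := by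
    intro h
    rcases Real.sin_eq_zero_iff.mp h with ⟨n, hn⟩
    have hn0 : 0 < n := by
      rcases lt_trichotomy n 0 with h'|h'|h'
      · exfalso
        have : (n:ℝ) ≤ -1 := by exact_mod_cast (by omega : n ≤ -1)
        nlinarith
      · exfalso; rw [h'] at hn; simp at hn; nlinarith
      · exact h'
    have hn2 : n < 2 := by
      by_contra hc
      push_neg at hc
      have : (2:ℝ) ≤ (n:ℝ) := by exact_mod_cast hc
      nlinarith
    have hn1 : n = 1 := by omega
    rw [hn1] at hn
    apply hθ2
    push_cast at hn
    linarith
  have habs : |Real.sin θ| = Real.sin θ := abs_of_pos hsθ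
  have habs2 : |Real.sin (2 * θ)| ≠ 0 := abs_ne_zero.mpr hs2
  -- positivity of the bracket
  have hkey : 0 < 1 / |Real.sin (2 * θ)| ^ 3
      + 1 / (Real.sin θ ^ 2 * Real.sin (2 * θ)) := by
    rcases lt_or_gt_of_ne hs2 with hneg | hpos
    · -- sin 2θ < 0, so θ > π/2, cos θ ∈ (-1/2, 0)
      have hcos : Real.cos θ < 0 := by
        have := Real.sin_two_mul θ
        nlinarith
      have hcosge : -(1/2:ℝ) < Real.cos θ := by
        have h23 : Real.cos (2 * Real.pi / 3) < Real.cos θ := by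
          apply Real.cos_lt_cos_of_nonneg_of_le_pi hθ0.le (by linarith) hθ1
        have : Real.cos (2 * Real.pi / 3) = -(1/2 : ℝ) := by
          have : (2 * Real.pi / 3 : ℝ) = Real.pi - Real.pi / 3 := by ring
          rw [this, Real.cos_pi_sub, Real.cos_pi_div_three]
        linarith
      have hc2 : Real.cos θ ^ 2 < 1/4 := by nlinarith
      have hs2sq : Real.sin (2 * θ) ^ 2 < Real.sin θ ^ 2 := by
        rw [Real.sin_two_mul]
        nlinarith [mul_pos (mul_pos hsθ hsθ) (by linarith : (0:ℝ) < 1 - 4 * Real.cos θ ^ 2)]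
      have habsneg : |Real.sin (2 * θ)| = -Real.sin (2 * θ) := abs_of_neg hneg
      set t := -Real.sin (2 * θ) with ht
      have ht0 : 0 < t := by simp [ht]; linarith
      have hseq : Real.sin (2 * θ) = -t := by simp [ht]
      rw [habsneg, hseq]
      have heq : 1 / t ^ 3 + 1 / (Real.sin θ ^ 2 * -t)
          = (Real.sin θ ^ 2 - t ^ 2) / (t ^ 3 * Real.sin θ ^ 2) := by
        field_simp
        ring
      rw [heq]
      apply div_pos
      · have : t ^ 2 = Real.sin (2 * θ) ^ 2 := by rw [hseq]; ring
        rw [this]; linarith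
      · positivity
    · have h1 : |Real.sin (2 * θ)| = Real.sin (2 * θ) := abs_of_pos hpos
      rw [h1]
      positivity
  refine ⟨by positivity, ?_, ?_, ?_⟩
  · have e1 : Real.sin (2 * -θ) = -Real.sin (2 * θ) := by
      rw [mul_neg, Real.sin_neg]
    have e2 : (-θ - θ) = -(2 * θ) := by ring
    have e3 : (-θ - 0) = -θ := by ring
    rw [e1, e2, e3, Real.sin_neg, Real.sin_neg, abs_neg, abs_neg, habs]
    field_simp
    ring
  · have e2 : (θ - -θ) = 2 * θ := by ring
    have e3 : (θ - 0) = θ := by ring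
    rw [e2, e3, habs]
    field_simp
  · have e1 : Real.sin (2 * (0:ℝ)) = 0 := by simp
    have e2 : ((0:ℝ) - -θ) = θ := by ring
    have e3 : ((0:ℝ) - θ) = -θ := by ring
    rw [e1, e2, e3, Real.sin_neg, abs_neg, habs]
    field_simp
    ring
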